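/- For the invariant region Σ = {(ρ,m,n,E) : ρ > 0, p > 0, q ≤ 0} of the 2D Euler equations, the gradient of q with respect to the primitive variables U = (ρ, u^N, u^T, p) on the boundary surface {q = 0} is parallel to the left eigenvector l² = (1, 0, 0, −1/c²) of the projected system's matrix A(U); specifically ∇_U (s₀ − s) ρ restricted to {q=0} equals γ·l² up to the stated normalization, where s = log(p/ρ^γ) and c² = γp/ρ. -/

import Mathlib

open Matrix

/-- On the boundary `{q = 0}` of the invariant region, the gradient of
`q(U) = (s₀ - s)ρ` in the primitive variables `U = (ρ, u^N, u^T, p)` equals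
`γ·l²` where `l² = (1, 0, 0, -1/c²)` is the left eigenvector of `A(U)` for the
eigenvalue `u^N` and `c² = γp/ρ`. -/
theorem stmt_16 (γ s₀ ρ uN uT p : ℝ) (hγ : 1 < γ) (hρ : 0 < ρ) (hp : 0 < p)
    (hs : Real.log (p / ρ ^ γ) = s₀)
    (c2 : ℝ) (hc2 : c2 = γ * p / ρ)
    (Q : (Fin 4 → ℝ) → ℝ)
    (hQ : Q = fun v => (s₀ - Real.log (v 3 / (v 0) ^ γ)) * v 0)
    (L : (Fin 4 → ℝ) →L[ℝ] ℝ)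
    (hL : HasFDerivAt Q L ![ρ, uN, uT, p]) :
    ∀ ξ : Fin 4 → ℝ, L ξ = γ * (![1, 0, 0, -1/c2] ⬝ᵥ ξ) := by
  set pt : Fin 4 → ℝ := ![ρ, uN, uT, p] with hpt
  have hpt0 : pt 0 = ρ := rfl
  have hpt3 : pt 3 = p := rfl
  set P0 : (Fin 4 → ℝ) →L[ℝ] ℝ := ContinuousLinearMap.proj 0
  set P3 : (Fin 4 → ℝ) →L[ℝ] ℝ := ContinuousLinearMap.proj 3
  -- smooth representative
  set f : (Fin 4 → ℝ) → ℝ :=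
    fun v => (s₀ - (Real.log (v 3) - γ * Real.log (v 0))) * v 0 with hf
  -- derivative of f at pt
  have h0 : HasFDerivAt (fun v : Fin 4 → ℝ => v 0) P0 pt := P0.hasFDerivAt
  have h3 : HasFDerivAt (fun v : Fin 4 → ℝ => v 3) P3 pt := P3.hasFDerivAt
  have hlog0 : HasFDerivAt (fun v : Fin 4 → ℝ => Real.log (v 0)) (ρ⁻¹ • P0) pt := by
    simpa [hpt0] using h0.log (by simpa [hpt0] using hρ.ne')
  have hlog3 : HasFDerivAt (fun v : Fin 4 → ℝ => Real.log (v 3)) (p⁻¹ • P3) pt := by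
    simpa [hpt3] using h3.log (by simpa [hpt3] using hp.ne')
  have hfirst : HasFDerivAt (fun v : Fin 4 → ℝ => s₀ - (Real.log (v 3) - γ * Real.log (v 0)))
      (-(p⁻¹ • P3 - γ • ρ⁻¹ • P0)) pt := by
    exact ((hlog3.sub (hlog0.const_mul γ)).const_sub s₀)
  have hsval : s₀ - (Real.log p - γ * Real.log ρ) = 0 := by
    have : Real.log (p / ρ ^ γ) = Real.log p - γ * Real.log ρ := by
      rw [Real.log_div hp.ne' (Real.rpow_pos_of_pos hρ γ).ne', Real.log_rpow hρ]
    rw [← hs, this]; ring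
  have hfd : HasFDerivAt f
      ((s₀ - (Real.log (pt 3) - γ * Real.log (pt 0))) • P0
        + pt 0 • (-(p⁻¹ • P3 - γ • ρ⁻¹ • P0))) pt := hfirst.mul h0
  rw [hpt0, hpt3] at hfd
  rw [hsval] at hfd
  -- Q agrees with f near pt
  have heq : Q =ᶠ[nhds pt] f := by
    have hopen : IsOpen {v : Fin 4 → ℝ | 0 < v 0 ∧ 0 < v 3} :=
      (isOpen_lt continuous_const (continuous_apply 0)).inter
        (isOpen_lt continuous_const (continuous_apply 3))
    have hmem : pt ∈ {v : Fin 4 → ℝ | 0 < v 0 ∧ 0 < v 3} := ⟨hρ, hp⟩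
    filter_upwards [hopen.mem_nhds hmem] with v hv
    have h0v : (0:ℝ) < v 0 := hv.1
    have h3v : (0:ℝ) < v 3 := hv.2
    simp only [hQ, hf]
    rw [Real.log_div h3v.ne' (Real.rpow_pos_of_pos h0v γ).ne', Real.log_rpow h0v]
  have hfd' : HasFDerivAt Q
      ((0:ℝ) • P0 + ρ • (-(p⁻¹ • P3 - γ • ρ⁻¹ • P0))) pt := hfd.congr_of_eventuallyEq heq
  have hLeq := hL.unique hfd'
  intro ξ
  have hc2pos : 0 < c2 := by rw [hc2]; positivity
  have : L ξ = γ * ξ 0 - (ρ / p) * ξ 3 := by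
    rw [hLeq]
    simp only [ContinuousLinearMap.add_apply, ContinuousLinearMap.smul_apply,
      ContinuousLinearMap.neg_apply, ContinuousLinearMap.sub_apply]
    have hP0 : P0 ξ = ξ 0 := rfl
    have hP3 : P3 ξ = ξ 3 := rfl
    rw [hP0, hP3]
    field_simp
    linear_combination (p * ξ 0 * γ) * mul_inv_cancel₀ hρ.ne' - (ξ 3 * ρ) * mul_inv_cancel₀ hp.ne'
  rw [this]
  have hdot : ![1, 0, 0, -1/c2] ⬝ᵥ ξ = ξ 0 + (-1/c2) * ξ 3 := by
    simp [dotProduct, Fin.sum_univ_four]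
  rw [hdot, hc2]
  have hγ0 : γ ≠ 0 := by positivity
  field_simp
  ring
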